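/- Let 0 < α ≤ η′/2 ≤ η/2 and let G be a graph on n vertices. Suppose H⁰ ⊆ G is an (η, α)-robust subgraph on n₀ vertices, and H^k is obtained from H⁰ by repeatedly adding a vertex of G outside the current subgraph having at least η′n neighbors inside, until no such vertex exists (adding k vertices in total). Then H^k is (η′, αη′τ)-robust, where τ = n₀/(n₀ + k). -/

import Mathlib

/-- Number of ordered pairs `(x, y)` with `x ∈ X`, `y ∈ Y` and `xy ∈ E(G)`. -/
noncomputable def eBetween {V : Type*} (G : SimpleGraph V) (X Y : Set V) : ℕ :=
  {p : V × V | p.1 ∈ X ∧ p.2 ∈ Y ∧ G.Adj p.1 p.2}.ncard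

/-- Number of neighbors of `v` inside the set `S`. -/
noncomputable def nbrIn {V : Type*} (G : SimpleGraph V) (v : V) (S : Set V) : ℕ :=
  (G.neighborSet v ∩ S).ncard

set_option maxHeartbeats 1000000

section AuxAugment
set_option linter.unusedSectionVars false
variable {V : Type} [Fintype V] [DecidableEq V]

lemma nbrIn_mono (G : SimpleGraph V) (u : V) {S T : Finset V} (h : S ⊆ T) :
    nbrIn G u ↑S ≤ nbrIn G u ↑T :=
  Set.ncard_le_ncard (Set.inter_subset_inter_right _ (Finset.coe_subset.mpr h)) (Set.toFinite _)

lemma nbrIn_le_card (G : SimpleGraph V) (u : V) (S : Finset V) :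
    nbrIn G u ↑S ≤ S.card := by
  have := Set.ncard_le_ncard (Set.inter_subset_right (s := G.neighborSet u) (t := (↑S : Set V)))
    (Set.toFinite _)
  simpa [nbrIn, Set.ncard_coe_finset] using this

lemma nbrIn_split (G : SimpleGraph V) (u : V) {S T R : Finset V} (h : S ⊆ T ∪ R) :
    nbrIn G u ↑S ≤ nbrIn G u ↑T + nbrIn G u ↑R := by
  have hsub : G.neighborSet u ∩ ↑S ⊆ (G.neighborSet u ∩ ↑T) ∪ (G.neighborSet u ∩ ↑R) := by
    intro x hx
    rcases hx with ⟨h1, h2⟩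
    rcases Finset.mem_union.mp (h h2) with h3 | h3
    · exact Or.inl ⟨h1, h3⟩
    · exact Or.inr ⟨h1, h3⟩
  calc nbrIn G u ↑S ≤ ((G.neighborSet u ∩ ↑T) ∪ (G.neighborSet u ∩ ↑R)).ncard :=
        Set.ncard_le_ncard hsub (Set.toFinite _)
    _ ≤ _ := Set.ncard_union_le _ _

lemma eBetween_mono (G : SimpleGraph V) {X X' Y Y' : Finset V} (hX : X ⊆ X') (hY : Y ⊆ Y') :
    eBetween G ↑X ↑Y ≤ eBetween G ↑X' ↑Y' := by
  apply Set.ncard_le_ncard _ (Set.toFinite _)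
  rintro p ⟨h1, h2, h3⟩
  exact ⟨hX h1, hY h2, h3⟩

lemma eBetween_symm (G : SimpleGraph V) (X Y : Set V) : eBetween G X Y = eBetween G Y X := by
  rw [eBetween, eBetween]
  have h : {p : V × V | p.1 ∈ Y ∧ p.2 ∈ X ∧ G.Adj p.1 p.2}
      = Prod.swap '' {p : V × V | p.1 ∈ X ∧ p.2 ∈ Y ∧ G.Adj p.1 p.2} := by
    ext ⟨a, b⟩
    constructor
    · rintro ⟨hy, hx, hadj⟩; exact ⟨(b, a), ⟨hx, hy, hadj.symm⟩, rfl⟩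
    · rintro ⟨⟨c, d⟩, ⟨hc, hd, hadj⟩, hswap⟩
      cases hswap
      exact ⟨hd, hc, hadj.symm⟩
  rw [h, Set.ncard_image_of_injective _ Prod.swap_injective]

lemma eBetween_eq_sum (G : SimpleGraph V) (X Y : Finset V) :
    eBetween G ↑X ↑Y = ∑ a ∈ X, nbrIn G a ↑Y := by
  classical
  have h1 : {p : V × V | p.1 ∈ (↑X : Set V) ∧ p.2 ∈ (↑Y : Set V) ∧ G.Adj p.1 p.2}
      = ↑(Finset.univ.filter (fun p : V × V => p.1 ∈ X ∧ p.2 ∈ Y ∧ G.Adj p.1 p.2)) := by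
    ext p; simp
  rw [eBetween, h1, Set.ncard_coe_finset]
  rw [Finset.card_eq_sum_card_fiberwise (f := Prod.fst) (t := X)
    (by intro p hp; simp at hp; exact hp.1)]
  refine Finset.sum_congr rfl fun a ha => ?_
  have h2 : nbrIn G a ↑Y = (Finset.univ.filter (fun b => b ∈ Y ∧ G.Adj a b)).card := by
    rw [nbrIn]
    have h3 : G.neighborSet a ∩ ↑Y = ↑(Finset.univ.filter (fun b => b ∈ Y ∧ G.Adj a b)) := by
      ext b; simp [SimpleGraph.mem_neighborSet, and_comm]
    rw [h3, Set.ncard_coe_finset]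
  rw [h2]
  apply Finset.card_bij (fun p _ => p.2)
  · intro p hp
    simp only [Finset.mem_filter, Finset.mem_univ, true_and] at hp ⊢
    obtain ⟨⟨hx, hy, hadj⟩, hpa⟩ := hp
    subst hpa
    exact ⟨hy, hadj⟩
  · intro p hp q hq hpq
    have hp2 := (Finset.mem_filter.mp hp).2
    have hq2 := (Finset.mem_filter.mp hq).2
    exact Prod.ext_iff.mpr ⟨hp2.trans hq2.symm, hpq⟩
  · intro b hb
    simp only [Finset.mem_filter, Finset.mem_univ, true_and] at hb
    exact ⟨(a, b), by simp [ha, hb.1, hb.2], rfl⟩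


lemma Amono {G : SimpleGraph V} {n k : ℕ} {η' : ℝ} {A : ℕ → Finset V} {v : ℕ → V}
    (hstep : ∀ i < k, v (i + 1) ∉ A i ∧ A (i + 1) = insert (v (i + 1)) (A i) ∧
      η' * n ≤ (nbrIn G (v (i + 1)) ↑(A i) : ℝ)) :
    ∀ i j, i ≤ j → j ≤ k → A i ⊆ A j := by
  intro i j hij hjk
  induction j with
  | zero =>
    have : i = 0 := Nat.le_zero.mp hij
    subst this; exact Finset.Subset.refl _
  | succ j ih =>
    rcases Nat.lt_succ_iff_lt_or_eq.mp (Nat.lt_succ_of_le hij) with h | h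
    · have h1 : A i ⊆ A j := ih (by omega) (by omega)
      obtain ⟨-, heq, -⟩ := hstep j (by omega)
      rw [heq]
      exact h1.trans (Finset.subset_insert _ _)
    · subst h; exact Finset.Subset.refl _

lemma Acard {G : SimpleGraph V} {n n₀ k : ℕ} {η' : ℝ} {A : ℕ → Finset V} {v : ℕ → V}
    (hA0 : (A 0).card = n₀)
    (hstep : ∀ i < k, v (i + 1) ∉ A i ∧ A (i + 1) = insert (v (i + 1)) (A i) ∧
      η' * n ≤ (nbrIn G (v (i + 1)) ↑(A i) : ℝ)) :
    ∀ j, j ≤ k → (A j).card = n₀ + j := by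
  intro j hjk
  induction j with
  | zero => simpa using hA0
  | succ j ih =>
    obtain ⟨hmem, heq, -⟩ := hstep j (by omega)
    rw [heq, Finset.card_insert_of_notMem hmem, ih (by omega)]
    omega

lemma Amem {G : SimpleGraph V} {n k : ℕ} {η' : ℝ} {A : ℕ → Finset V} {v : ℕ → V}
    (hstep : ∀ i < k, v (i + 1) ∉ A i ∧ A (i + 1) = insert (v (i + 1)) (A i) ∧
      η' * n ≤ (nbrIn G (v (i + 1)) ↑(A i) : ℝ)) :
    ∀ j, j ≤ k → ∀ u ∈ A j, u ∈ A 0 ∨ ∃ s, s < j ∧ u = v (s + 1) := by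
  intro j hjk
  induction j with
  | zero => intro u hu; exact Or.inl hu
  | succ j ih =>
    intro u hu
    obtain ⟨-, heq, -⟩ := hstep j (by omega)
    rw [heq, Finset.mem_insert] at hu
    rcases hu with h | h
    · exact Or.inr ⟨j, by omega, h⟩
    · rcases ih (by omega) u h with h' | ⟨s, hs, h'⟩
      · exact Or.inl h'
      · exact Or.inr ⟨s, by omega, h'⟩

lemma degAk {G : SimpleGraph V} {n k : ℕ} {η η' : ℝ} {A : ℕ → Finset V} {v : ℕ → V}
    (hηη' : η' ≤ η)
    (hrobdeg : ∀ x ∈ A 0, η * n ≤ (nbrIn G x ↑(A 0) : ℝ))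
    (hstep : ∀ i < k, v (i + 1) ∉ A i ∧ A (i + 1) = insert (v (i + 1)) (A i) ∧
      η' * n ≤ (nbrIn G (v (i + 1)) ↑(A i) : ℝ)) :
    ∀ x ∈ A k, η' * n ≤ (nbrIn G x ↑(A k) : ℝ) := by
  intro x hx
  have hmono := Amono hstep
  rcases Amem hstep k le_rfl x hx with h | ⟨s, hs, h⟩
  · have hd := hrobdeg x h
    have hle : nbrIn G x ↑(A 0) ≤ nbrIn G x ↑(A k) :=
      nbrIn_mono G x (hmono 0 k (Nat.zero_le k) le_rfl)
    have hle' : (nbrIn G x ↑(A 0) : ℝ) ≤ (nbrIn G x ↑(A k) : ℝ) := Nat.cast_le.mpr hle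
    have hnn : (0:ℝ) ≤ (n:ℝ) := Nat.cast_nonneg n
    nlinarith
  · subst h
    have hd := (hstep s hs).2.2
    have hle : nbrIn G (v (s+1)) ↑(A s) ≤ nbrIn G (v (s+1)) ↑(A k) :=
      nbrIn_mono G _ (hmono s k (Nat.le_of_lt hs) le_rfl)
    have hle' : ((nbrIn G (v (s+1)) ↑(A s)):ℝ) ≤ ((nbrIn G (v (s+1)) ↑(A k)):ℝ) := by exact_mod_cast hle
    linarith

lemma key {G : SimpleGraph V} {n n₀ k : ℕ} (hn : Fintype.card V = n)
    {η η' α : ℝ} (hα : 0 < α) (h1 : α ≤ η' / 2) (h2 : η' / 2 ≤ η / 2)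
    {A : ℕ → Finset V} {v : ℕ → V} (hA0 : (A 0).card = n₀)
    (hrobdeg : ∀ x ∈ A 0, η * n ≤ (nbrIn G x ↑(A 0) : ℝ))
    (hrobcut : ∀ X : Finset V, X ⊆ A 0 →
      α * X.card * (A 0 \ X).card ≤ (eBetween G ↑X ↑(A 0 \ X) : ℝ))
    (hstep : ∀ i < k, v (i + 1) ∉ A i ∧ A (i + 1) = insert (v (i + 1)) (A i) ∧
      η' * n ≤ (nbrIn G (v (i + 1)) ↑(A i) : ℝ))
    (hn₀ : 1 ≤ n₀)
    (X : Finset V) (hX : X ⊆ A k)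
    (hx₀ : ((A 0 ∩ X).card : ℝ) < η' * n / 2) :
    α * η' * ((n₀ : ℝ) / (n₀ + k)) * X.card * ((A k \ X).card) ≤
      (eBetween G ↑X ↑(A k \ X) : ℝ) := by
  classical
  have hmono := Amono hstep
  have hη' : 0 < η' := by linarith
  have hηη' : η' ≤ η := by linarith
  -- basic cardinalities
  have hA0sub : A 0 ⊆ A k := hmono 0 k (Nat.zero_le k) le_rfl
  have hn₀n : n₀ ≤ n := by
    rw [← hA0, ← hn]; exact Finset.card_le_univ _
  have hn1 : 1 ≤ n := le_trans hn₀ hn₀n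
  have hnR : (1:ℝ) ≤ (n:ℝ) := by exact_mod_cast hn1
  -- η ≤ 1
  obtain ⟨w, hw⟩ := Finset.card_pos.mp (by omega : 0 < (A 0).card)
  have hηn : η * n ≤ (n₀ : ℝ) := by
    have h3 := hrobdeg w hw
    have h4 : (nbrIn G w ↑(A 0) : ℝ) ≤ (n₀ : ℝ) := by
      have := nbrIn_le_card G w (A 0)
      rw [hA0] at this
      exact_mod_cast this
    linarith
  have hη1 : η ≤ 1 := by
    have hn₀nR : (n₀:ℝ) ≤ (n:ℝ) := Nat.cast_le.mpr hn₀n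
    nlinarith
  have hη'1 : η' ≤ 1 := le_trans hηη' hη1
  set Y := A k \ X with hY
  have hAkcard : (A k).card = n₀ + k := Acard hA0 hstep k le_rfl
  have hxy : Y.card + X.card = n₀ + k := by
    rw [hY, ← hAkcard]; exact Finset.card_sdiff_add_card_eq_card hX
  have hmn : n₀ + k ≤ n := by rw [← hAkcard, ← hn]; exact Finset.card_le_univ _
  set x : ℝ := (X.card : ℝ) with hxdef
  set y : ℝ := (Y.card : ℝ) with hydef
  have hxyR : y + x = (n₀ : ℝ) + k := by
    rw [hxdef, hydef]; exact_mod_cast congrArg (Nat.cast (R := ℝ)) hxy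
  have hx0 : 0 ≤ x := Nat.cast_nonneg _
  have hy0 : 0 ≤ y := Nat.cast_nonneg _
  have hmnR : (n₀:ℝ) + k ≤ n := by exact_mod_cast hmn
  set τ : ℝ := (n₀ : ℝ) / ((n₀:ℝ) + k) with hτdef
  have hmpos : (0:ℝ) < (n₀:ℝ) + k := by
    have : (1:ℝ) ≤ (n₀:ℝ) := by exact_mod_cast hn₀
    positivity
  have hτm : τ * ((n₀:ℝ) + k) = n₀ := div_mul_cancel₀ _ (ne_of_gt hmpos)
  have hτ0 : 0 ≤ τ := by positivity
  have hτ1 : τ ≤ 1 := by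
    rw [hτdef, div_le_one hmpos]
    have : (0:ℝ) ≤ (k:ℝ) := Nat.cast_nonneg _
    linarith
  have hdeg := degAk hηη' hrobdeg hstep
  have hAkXY : A k ⊆ X ∪ Y := by
    intro a ha
    rw [Finset.mem_union, hY, Finset.mem_sdiff]
    by_cases h : a ∈ X
    · exact Or.inl h
    · exact Or.inr ⟨ha, h⟩
  have hesum : (eBetween G ↑X ↑Y : ℝ) = ∑ u ∈ X, (nbrIn G u ↑Y : ℝ) := by
    rw [eBetween_eq_sum]; push_cast; ring
  by_cases hxle : x ≤ η' * n / 2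
  · -- small X case
    have hptw : ∀ u ∈ X, η' * n - x ≤ (nbrIn G u ↑Y : ℝ) := by
      intro u hu
      have hd := hdeg u (hX hu)
      have hsplit := nbrIn_split G u hAkXY
      have hXle := nbrIn_le_card G u X
      have hsplitR : (nbrIn G u ↑(A k) : ℝ) ≤ (nbrIn G u ↑X : ℝ) + (nbrIn G u ↑Y : ℝ) := by
        exact_mod_cast hsplit
      have hXleR : (nbrIn G u ↑X : ℝ) ≤ x := by rw [hxdef]; exact_mod_cast hXle
      linarith
    have hlow : x * (η' * n - x) ≤ (eBetween G ↑X ↑Y : ℝ) := by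
      rw [hesum]
      calc x * (η' * n - x) = ∑ _u ∈ X, (η' * n - x) := by
            rw [Finset.sum_const, nsmul_eq_mul, hxdef]
        _ ≤ ∑ u ∈ X, (nbrIn G u ↑Y : ℝ) := Finset.sum_le_sum hptw
    have hyn : y ≤ (n:ℝ) := by linarith
    have ht : η' * τ ≤ 1 := mul_le_one₀ hη'1 hτ0 hτ1
    have hτy : η' * τ * y ≤ (n:ℝ) := by
      have h5 := mul_le_mul_of_nonneg_right ht hy0
      rw [one_mul] at h5
      linarith
    have t2 : α * (η' * τ * y) ≤ α * n := mul_le_mul_of_nonneg_left hτy hα.le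
    have t3 : α * n ≤ η' * n - x := by nlinarith
    calc α * η' * τ * x * y = (α * (η' * τ * y)) * x := by ring
      _ ≤ (η' * n - x) * x := mul_le_mul_of_nonneg_right (t2.trans t3) hx0
      _ = x * (η' * n - x) := by ring
      _ ≤ _ := hlow
  · -- large X case: find the threshold step
    push_neg at hxle
    have hPk : ¬ (((A k ∩ X).card : ℝ) ≤ η' * n / 2) := by
      rw [Finset.inter_eq_right.mpr hX]
      push_neg
      exact hxle
    have hexists : ∃ i, i < k ∧ (((A i ∩ X).card : ℝ) ≤ η' * n / 2) ∧
        ¬ (((A (i+1) ∩ X).card : ℝ) ≤ η' * n / 2) := by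
      by_contra hcon
      push_neg at hcon
      have hall : ∀ j, j ≤ k → (((A j ∩ X).card : ℝ) ≤ η' * n / 2) := by
        intro j
        induction j with
        | zero => intro _; exact hx₀.le
        | succ j ih =>
          intro hjk
          exact hcon j (by omega) (ih (by omega))
      exact hPk (hall k le_rfl)
    obtain ⟨i, hik, hPi, hPsi⟩ := hexists
    push_neg at hPsi
    obtain ⟨hvnot, hAeq, -⟩ := hstep i hik
    set c : ℝ := ((A i ∩ X).card : ℝ) with hcdef
    have hc0 : 0 ≤ c := Nat.cast_nonneg _
    have hsub : A (i+1) ∩ X ⊆ insert (v (i+1)) (A i ∩ X) := by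
      rw [hAeq]
      intro a ha
      rw [Finset.mem_inter, Finset.mem_insert] at ha
      rw [Finset.mem_insert, Finset.mem_inter]
      rcases ha with ⟨h | h, h2⟩
      · exact Or.inl h
      · exact Or.inr ⟨h, h2⟩
    have hcard1 : ((A (i+1) ∩ X).card : ℝ) ≤ c + 1 := by
      have := (Finset.card_le_card hsub).trans (Finset.card_insert_le _ _)
      rw [hcdef]
      exact_mod_cast this
    -- pointwise bound on A(i+1) ∩ X
    have hptw : ∀ u ∈ A (i+1) ∩ X, η' * n - c ≤ (nbrIn G u ↑Y : ℝ) := by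
      intro u hu
      rw [Finset.mem_inter] at hu
      obtain ⟨hu1, hu2⟩ := hu
      have hsd : ∀ s, s ≤ k → A s \ X ⊆ Y := by
        intro s hs
        rw [hY]
        exact Finset.sdiff_subset_sdiff (hmono s k hs le_rfl) (le_refl X)
      rcases Amem hstep (i+1) (by omega) u hu1 with h | ⟨s, hs, h⟩
      · have hd := hrobdeg u h
        have hsplit : nbrIn G u ↑(A 0) ≤ nbrIn G u ↑(A 0 ∩ X) + nbrIn G u ↑(A 0 \ X) := by
          apply nbrIn_split
          intro a ha
          rw [Finset.mem_union, Finset.mem_inter, Finset.mem_sdiff]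
          by_cases hax : a ∈ X
          · exact Or.inl ⟨ha, hax⟩
          · exact Or.inr ⟨ha, hax⟩
        have hle1 : nbrIn G u ↑(A 0 ∩ X) ≤ (A 0 ∩ X).card := nbrIn_le_card _ _ _
        have hle2 : (A 0 ∩ X).card ≤ (A i ∩ X).card :=
          Finset.card_le_card (Finset.inter_subset_inter (hmono 0 i (Nat.zero_le i) (by omega)) (le_refl X))
        have hle3 : nbrIn G u ↑(A 0 \ X) ≤ nbrIn G u ↑Y :=
          nbrIn_mono G u (hsd 0 (Nat.zero_le k))
        have c1 : (nbrIn G u ↑(A 0) : ℝ) ≤ c + (nbrIn G u ↑Y : ℝ) := by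
          rw [hcdef]
          push_cast
          have r1 : ((nbrIn G u ↑(A 0 ∩ X)) : ℝ) ≤ ((A i ∩ X).card : ℝ) := by
            exact_mod_cast hle1.trans hle2
          have r2 : ((nbrIn G u ↑(A 0 \ X)) : ℝ) ≤ (nbrIn G u ↑Y : ℝ) := by exact_mod_cast hle3
          have r3 : ((nbrIn G u ↑(A 0)) : ℝ) ≤ (nbrIn G u ↑(A 0 ∩ X) : ℝ) + (nbrIn G u ↑(A 0 \ X) : ℝ) := by
            exact_mod_cast hsplit
          linarith
        have hnn : (0:ℝ) ≤ (n:ℝ) := Nat.cast_nonneg n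
        nlinarith
      · subst h
        have hsk : s < k := by omega
        have hd := (hstep s hsk).2.2
        have hsplit : nbrIn G (v (s+1)) ↑(A s) ≤
            nbrIn G (v (s+1)) ↑(A s ∩ X) + nbrIn G (v (s+1)) ↑(A s \ X) := by
          apply nbrIn_split
          intro a ha
          rw [Finset.mem_union, Finset.mem_inter, Finset.mem_sdiff]
          by_cases hax : a ∈ X
          · exact Or.inl ⟨ha, hax⟩
          · exact Or.inr ⟨ha, hax⟩
        have hle1 : nbrIn G (v (s+1)) ↑(A s ∩ X) ≤ (A s ∩ X).card := nbrIn_le_card _ _ _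
        have hle2 : (A s ∩ X).card ≤ (A i ∩ X).card :=
          Finset.card_le_card (Finset.inter_subset_inter (hmono s i (by omega) (by omega)) (le_refl X))
        have hle3 : nbrIn G (v (s+1)) ↑(A s \ X) ≤ nbrIn G (v (s+1)) ↑Y :=
          nbrIn_mono G _ (hsd s (by omega))
        have r1 : ((nbrIn G (v (s+1)) ↑(A s ∩ X)) : ℝ) ≤ c := by
          rw [hcdef]; exact_mod_cast hle1.trans hle2
        have r2 : ((nbrIn G (v (s+1)) ↑(A s \ X)) : ℝ) ≤ (nbrIn G (v (s+1)) ↑Y : ℝ) := by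
          exact_mod_cast hle3
        have r3 : ((nbrIn G (v (s+1)) ↑(A s)) : ℝ) ≤ (nbrIn G (v (s+1)) ↑(A s ∩ X) : ℝ) + (nbrIn G (v (s+1)) ↑(A s \ X) : ℝ) := by
          exact_mod_cast hsplit
        linarith
    -- sum the pointwise bound over A(i+1) ∩ X
    have hsubX : A (i+1) ∩ X ⊆ X := Finset.inter_subset_right
    have hsum1 : ∑ u ∈ A (i+1) ∩ X, nbrIn G u ↑Y ≤ ∑ u ∈ X, nbrIn G u ↑Y :=
      Finset.sum_le_sum_of_subset hsubX
    have hlow : ((A (i+1) ∩ X).card : ℝ) * (η' * n - c) ≤ (eBetween G ↑X ↑Y : ℝ) := by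
      rw [hesum]
      calc ((A (i+1) ∩ X).card : ℝ) * (η' * n - c)
          = ∑ _u ∈ A (i+1) ∩ X, (η' * n - c) := by rw [Finset.sum_const, nsmul_eq_mul]
        _ ≤ ∑ u ∈ A (i+1) ∩ X, (nbrIn G u ↑Y : ℝ) := Finset.sum_le_sum hptw
        _ ≤ ∑ u ∈ X, (nbrIn G u ↑Y : ℝ) := by exact_mod_cast hsum1
    have hbig : η' * n / 2 * (η' * n / 2) ≤ (eBetween G ↑X ↑Y : ℝ) := by
      have hf1 : η' * n / 2 ≤ ((A (i+1) ∩ X).card : ℝ) := hPsi.le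
      have hf2 : η' * n / 2 ≤ η' * n - c := by linarith
      have hpos : (0:ℝ) ≤ η' * n / 2 := by positivity
      calc η' * n / 2 * (η' * n / 2) ≤ ((A (i+1) ∩ X).card : ℝ) * (η' * n - c) := by
            apply mul_le_mul hf1 hf2 hpos (Nat.cast_nonneg _)
        _ ≤ _ := hlow
    -- final arithmetic
    have hxy4 : x * y ≤ ((n₀:ℝ) + k)^2 / 4 := by nlinarith [sq_nonneg (x - y)]
    have e1 : τ * (x * y) ≤ (n₀:ℝ) * n / 4 := by
      have hn₀0 : (0:ℝ) ≤ (n₀:ℝ) := Nat.cast_nonneg _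
      calc τ * (x * y) ≤ τ * (((n₀:ℝ) + k)^2 / 4) := mul_le_mul_of_nonneg_left hxy4 hτ0
        _ = (τ * ((n₀:ℝ) + k)) * (((n₀:ℝ) + k) / 4) := by ring
        _ = (n₀:ℝ) * (((n₀:ℝ) + k) / 4) := by rw [hτm]
        _ ≤ (n₀:ℝ) * ((n:ℝ) / 4) := by
            apply mul_le_mul_of_nonneg_left _ hn₀0
            linarith
        _ = (n₀:ℝ) * n / 4 := by ring
    have hn₀nR : (n₀:ℝ) ≤ (n:ℝ) := Nat.cast_le.mpr hn₀n
    have e3 : α * η' * ((n₀:ℝ) * n / 4) ≤ η' * n / 2 * (η' * n / 2) := by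
      have t1 : α * (η' * ((n₀:ℝ) * n)) ≤ (η'/2) * (η' * ((n₀:ℝ) * n)) :=
        mul_le_mul_of_nonneg_right h1 (by positivity)
      have t2 : (η' * η' / 2) * ((n:ℝ) * n₀) ≤ (η' * η' / 2) * ((n:ℝ) * n) := by
        apply mul_le_mul_of_nonneg_left _ (by positivity)
        exact mul_le_mul_of_nonneg_left hn₀nR (by positivity)
      nlinarith [t1, t2, sq_nonneg (η' * n)]
    calc α * η' * τ * x * y = α * η' * (τ * (x * y)) := by ring
      _ ≤ α * η' * ((n₀:ℝ) * n / 4) := by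
          apply mul_le_mul_of_nonneg_left e1 (by positivity)
      _ ≤ η' * n / 2 * (η' * n / 2) := e3
      _ ≤ _ := hbig

end AuxAugment

/-- let `0 < α ≤ η'/2 ≤ η/2` and let `G` be a graph on `n` vertices.
Suppose `H⁰`, the subgraph induced on the vertex set `A 0` of size `n₀`, is
`(η, α)`-robust, and `H^k` (induced on `A k`) is an `η'`-maximal extension of `H⁰`:
at each step a vertex with at least `η'n` neighbors inside is added, and at the end no
vertex outside has `η'n` neighbors inside.  Then `H^k` is `(η', αη'τ)`-robust with
`τ = n₀/(n₀ + k)`. -/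
theorem observation_augmentrobust {V : Type} [Fintype V] [DecidableEq V]
    (G : SimpleGraph V) (n n₀ k : ℕ) (hn : Fintype.card V = n)
    (η η' α : ℝ) (hα : 0 < α) (h1 : α ≤ η' / 2) (h2 : η' / 2 ≤ η / 2)
    (A : ℕ → Finset V) (v : ℕ → V) (hA0 : (A 0).card = n₀)
    (hrobdeg : ∀ x ∈ A 0, η * n ≤ (nbrIn G x ↑(A 0) : ℝ))
    (hrobcut : ∀ X : Finset V, X ⊆ A 0 →
      α * X.card * (A 0 \ X).card ≤ (eBetween G ↑X ↑(A 0 \ X) : ℝ))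
    (hstep : ∀ i < k, v (i + 1) ∉ A i ∧ A (i + 1) = insert (v (i + 1)) (A i) ∧
      η' * n ≤ (nbrIn G (v (i + 1)) ↑(A i) : ℝ))
    (hmax : ∀ u ∉ A k, (nbrIn G u ↑(A k) : ℝ) < η' * n) :
    (∀ x ∈ A k, η' * n ≤ (nbrIn G x ↑(A k) : ℝ)) ∧
      ∀ X : Finset V, X ⊆ A k →
        α * η' * ((n₀ : ℝ) / (n₀ + k)) * X.card * ((A k \ X).card) ≤
          (eBetween G ↑X ↑(A k \ X) : ℝ) := by
  classical
  have hη' : 0 < η' := by linarith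
  have hηη' : η' ≤ η := by linarith
  refine ⟨degAk hηη' hrobdeg hstep, ?_⟩
  intro X hX
  by_cases hn₀z : n₀ = 0
  · subst hn₀z
    have hz : ((0:ℕ):ℝ) / (((0:ℕ):ℝ) + k) = 0 := by simp
    rw [hz, mul_zero, zero_mul, zero_mul]
    positivity
  · have hn₀1 : 1 ≤ n₀ := Nat.one_le_iff_ne_zero.mpr hn₀z
    have hmono := Amono hstep
    have hA0sub : A 0 ⊆ A k := hmono 0 k (Nat.zero_le k) le_rfl
    by_cases hc1 : ((A 0 ∩ X).card : ℝ) < η' * n / 2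
    · exact key hn hα h1 h2 hA0 hrobdeg hrobcut hstep hn₀1 X hX hc1
    by_cases hc2 : ((A 0 ∩ (A k \ X)).card : ℝ) < η' * n / 2
    · have hYsub : A k \ X ⊆ A k := Finset.sdiff_subset
      have hkey := key hn hα h1 h2 hA0 hrobdeg hrobcut hstep hn₀1 (A k \ X) hYsub hc2
      have hXX : A k \ (A k \ X) = X := by
        exact sdiff_sdiff_eq_self hX
      rw [hXX, eBetween_symm G] at hkey
      calc α * η' * ((n₀:ℝ) / ((n₀:ℝ) + k)) * X.card * ((A k \ X).card)
          = α * η' * ((n₀:ℝ) / ((n₀:ℝ) + k)) * ((A k \ X).card) * X.card := by ring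
        _ ≤ _ := hkey
    · -- both intersections are large: use robustness of the core
      push_neg at hc1 hc2
      have hA0Y : A 0 ∩ (A k \ X) = A 0 \ X := by
        ext a
        simp only [Finset.mem_inter, Finset.mem_sdiff]
        constructor
        · rintro ⟨h3, -, h5⟩; exact ⟨h3, h5⟩
        · rintro ⟨h3, h4⟩; exact ⟨h3, hA0sub h3, h4⟩
      rw [hA0Y] at hc2
      set x₀ : ℝ := ((A 0 ∩ X).card : ℝ) with hx₀def
      set y₀ : ℝ := ((A 0 \ X).card : ℝ) with hy₀def
      have hx₀y₀ : x₀ + y₀ = (n₀ : ℝ) := by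
        rw [hx₀def, hy₀def, ← hA0]
        exact_mod_cast Finset.card_inter_add_card_sdiff (A 0) X
      -- robust cut applied to A 0 ∩ X
      have hcut := hrobcut (A 0 ∩ X) Finset.inter_subset_left
      rw [Finset.sdiff_inter_self_left] at hcut
      have hemono : eBetween G ↑(A 0 ∩ X) ↑(A 0 \ X) ≤ eBetween G ↑X ↑(A k \ X) :=
        eBetween_mono G Finset.inter_subset_right
          (Finset.sdiff_subset_sdiff hA0sub (le_refl X))
      have hemonoR : (eBetween G ↑(A 0 ∩ X) ↑(A 0 \ X) : ℝ) ≤ (eBetween G ↑X ↑(A k \ X) : ℝ) := by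
        exact_mod_cast hemono
      have hcore : α * x₀ * y₀ ≤ (eBetween G ↑X ↑(A k \ X) : ℝ) := by
        rw [hx₀def, hy₀def]; linarith
      -- arithmetic
      have hAkcard : (A k).card = n₀ + k := Acard hA0 hstep k le_rfl
      have hxy : (A k \ X).card + X.card = n₀ + k := by
        rw [← hAkcard]; exact Finset.card_sdiff_add_card_eq_card hX
      have hmn : n₀ + k ≤ n := by rw [← hAkcard, ← hn]; exact Finset.card_le_univ _
      set x : ℝ := (X.card : ℝ) with hxdef
      set y : ℝ := ((A k \ X).card : ℝ) with hydef
      have hxyR : y + x = (n₀ : ℝ) + k := by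
        rw [hxdef, hydef]; exact_mod_cast congrArg (Nat.cast (R := ℝ)) hxy
      have hx0 : 0 ≤ x := Nat.cast_nonneg _
      have hy0 : 0 ≤ y := Nat.cast_nonneg _
      have hmnR : (n₀:ℝ) + k ≤ n := by exact_mod_cast hmn
      have hn₀R : (1:ℝ) ≤ (n₀:ℝ) := by exact_mod_cast hn₀1
      set τ : ℝ := (n₀ : ℝ) / ((n₀:ℝ) + k) with hτdef
      have hmpos : (0:ℝ) < (n₀:ℝ) + k := by
        have : (0:ℝ) ≤ (k:ℝ) := Nat.cast_nonneg _
        linarith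
      have hτm : τ * ((n₀:ℝ) + k) = n₀ := div_mul_cancel₀ _ (ne_of_gt hmpos)
      have hτ0 : 0 ≤ τ := by positivity
      have hxy4 : x * y ≤ ((n₀:ℝ) + k)^2 / 4 := by nlinarith [sq_nonneg (x - y)]
      have hn₀0 : (0:ℝ) ≤ (n₀:ℝ) := Nat.cast_nonneg _
      have e1 : τ * (x * y) ≤ (n₀:ℝ) * n / 4 := by
        calc τ * (x * y) ≤ τ * (((n₀:ℝ) + k)^2 / 4) := mul_le_mul_of_nonneg_left hxy4 hτ0
          _ = (τ * ((n₀:ℝ) + k)) * (((n₀:ℝ) + k) / 4) := by ring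
          _ = (n₀:ℝ) * (((n₀:ℝ) + k) / 4) := by rw [hτm]
          _ ≤ (n₀:ℝ) * ((n:ℝ) / 4) := by
              apply mul_le_mul_of_nonneg_left _ hn₀0
              linarith
          _ = (n₀:ℝ) * n / 4 := by ring
      have hx₀0 : 0 ≤ x₀ := Nat.cast_nonneg _
      have hy₀0 : 0 ≤ y₀ := Nat.cast_nonneg _
      have e2 : η' * n / 2 * ((n₀:ℝ) / 2) ≤ x₀ * y₀ := by
        nlinarith [mul_nonneg (sub_nonneg.mpr hc1) hy₀0, mul_nonneg (sub_nonneg.mpr hc2) hx₀0]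
      have e3 : η' * (τ * (x * y)) ≤ x₀ * y₀ := by
        have s1 : η' * (τ * (x * y)) ≤ η' * ((n₀:ℝ) * n / 4) :=
          mul_le_mul_of_nonneg_left e1 hη'.le
        have s2 : η' * ((n₀:ℝ) * n / 4) = η' * n / 2 * ((n₀:ℝ) / 2) := by ring
        linarith
      calc α * η' * τ * x * y = α * (η' * (τ * (x * y))) := by ring
        _ ≤ α * (x₀ * y₀) := mul_le_mul_of_nonneg_left e3 hα.le
        _ = α * x₀ * y₀ := by ring
        _ ≤ _ := hcore
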